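/- Let A be an n×d real matrix of rank ρ with truncated SVD A_k = U_kΣ_kV_kᵀ, let k < min{n,d}, ε ∈ (0,1/3), γ ≥ 1, and let R be a d×t real matrix. Let X_opt minimize ‖A − XXᵀA‖_F² over all n×k indicator matrices. Suppose: (a) V_kᵀR has rank k and ‖(V_kᵀR)⁺‖₂ ≤ 1/(1−ε); (b) ‖A_k − AR(V_kᵀR)⁺V_kᵀ‖_F ≤ 4ε‖A − A_k‖_F; (c) ‖(I − X_optX_optᵀ)AR‖_F ≤ √(1+ε)·‖(I − X_optX_optᵀ)A‖_F; and (d) X̃ is an n×k indicator matrix with ‖(I − X̃X̃ᵀ)AR‖_F² ≤ γ‖(I − X_optX_optᵀ)AR‖_F². Then ‖(I − X̃X̃ᵀ)A_k‖_F ≤ √γ·(1 + 6.5ε)·‖(I − X_optX_optᵀ)A‖_F. -/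

import Mathlib

open MeasureTheory
open scoped Matrix

/-- Frobenius norm of a real matrix. -/
noncomputable def frobNorm {m n : ℕ} (M : Matrix (Fin m) (Fin n) ℝ) : ℝ :=
  Real.sqrt (∑ i, ∑ j, (M i j) ^ 2)

/-- Spectral (operator) norm of a real matrix, viewed as a linear map between
Euclidean spaces. -/
noncomputable def specNorm {m n : ℕ} (M : Matrix (Fin m) (Fin n) ℝ) : ℝ :=
  ‖LinearMap.toContinuousLinearMap (Matrix.toEuclideanLin M)‖

/-- `P` is the Moore–Penrose pseudoinverse of `M` (the four Penrose conditions;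
such a `P` is unique). -/
def IsMoorePenrose {m n : ℕ} (M : Matrix (Fin m) (Fin n) ℝ)
    (P : Matrix (Fin n) (Fin m) ℝ) : Prop :=
  M * P * M = M ∧ P * M * P = P ∧ (M * P)ᵀ = M * P ∧ (P * M)ᵀ = P * M

/-- `X` is an `n × k` cluster indicator matrix: each row `i` has a single nonzero
entry, in column `f i`, equal to `1/√(z_{f i})` where `z_j` is the number of rows
assigned to column `j`. -/
def IsIndicator {n k : ℕ} (X : Matrix (Fin n) (Fin k) ℝ) : Prop :=
  ∃ f : Fin n → Fin k, ∀ i j, X i j =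
    if f i = j then 1 / Real.sqrt ((Finset.univ.filter fun i' => f i' = j).card) else 0

/-- The singular values of a `k × t` real matrix `M` (in some order): the square
roots of the eigenvalues of `M * Mᵀ`. -/
noncomputable def singVals {k t : ℕ} (M : Matrix (Fin k) (Fin t) ℝ) (i : Fin k) : ℝ :=
  Real.sqrt ((Matrix.isHermitian_mul_conjTranspose_self M).eigenvalues i)

/-- The `d × t` random sign matrix with entries `±1/√t`, as a function of the
sample point `ω` (a `d × t` array of fair coins). -/
noncomputable def signMatrix (d t : ℕ) (ω : Fin d → Fin t → Bool) :
    Matrix (Fin d) (Fin t) ℝ :=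
  Matrix.of fun i j => (if ω i j then (1 : ℝ) else -1) / Real.sqrt t

/-- The law of a `d × t` matrix of i.i.d. fair signs: the uniform probability
measure on all `d × t` sign patterns. -/
noncomputable def signMeasure (d t : ℕ) : Measure (Fin d → Fin t → Bool) :=
  (PMF.uniformOfFintype (Fin d → Fin t → Bool)).toMeasure

def fsq {m n : ℕ} (M : Matrix (Fin m) (Fin n) ℝ) : ℝ := ∑ i, ∑ j, (M i j) ^ 2

lemma fsq_nonneg {m n : ℕ} (M : Matrix (Fin m) (Fin n) ℝ) : 0 ≤ fsq M :=
  Finset.sum_nonneg fun _ _ => Finset.sum_nonneg fun _ _ => sq_nonneg _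

lemma frobNorm_eq {m n : ℕ} (M : Matrix (Fin m) (Fin n) ℝ) :
    frobNorm M = Real.sqrt (fsq M) := rfl

lemma frobNorm_nonneg {m n : ℕ} (M : Matrix (Fin m) (Fin n) ℝ) : 0 ≤ frobNorm M :=
  Real.sqrt_nonneg _

lemma frobNorm_sq {m n : ℕ} (M : Matrix (Fin m) (Fin n) ℝ) :
    frobNorm M ^ 2 = fsq M := Real.sq_sqrt (fsq_nonneg M)

lemma fsq_eq_trace {m n : ℕ} (M : Matrix (Fin m) (Fin n) ℝ) :
    fsq M = Matrix.trace (Mᵀ * M) := by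
  unfold fsq
  rw [Finset.sum_comm]
  simp [Matrix.trace, Matrix.mul_apply, Matrix.diag, sq]

lemma fsq_mul_transpose_right {a b c : ℕ} (V : Matrix (Fin a) (Fin b) ℝ)
    (h : Vᵀ * V = 1) (M : Matrix (Fin c) (Fin b) ℝ) : fsq (M * Vᵀ) = fsq M := by
  rw [fsq_eq_trace, fsq_eq_trace, Matrix.transpose_mul, Matrix.transpose_transpose,
    Matrix.mul_assoc]
  rw [Matrix.trace_mul_comm V (Mᵀ * (M * Vᵀ))]
  congr 1
  rw [Matrix.mul_assoc, Matrix.mul_assoc, h, Matrix.mul_one]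

lemma fsq_mul_left_orth {a c : ℕ} (U : Matrix (Fin a) (Fin a) ℝ)
    (h : Uᵀ * U = 1) (M : Matrix (Fin a) (Fin c) ℝ) : fsq (U * M) = fsq M := by
  rw [fsq_eq_trace, fsq_eq_trace, Matrix.transpose_mul]
  rw [show Mᵀ * Uᵀ * (U * M) = Mᵀ * (Uᵀ * U) * M by
    rw [Matrix.mul_assoc, Matrix.mul_assoc, Matrix.mul_assoc], h, Matrix.mul_one]

lemma fsq_one_sub_proj {a b c : ℕ} (X : Matrix (Fin a) (Fin b) ℝ)
    (hX : X * (Xᵀ * X) = X) (M : Matrix (Fin a) (Fin c) ℝ) :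
    fsq ((1 - X * Xᵀ) * M) = fsq M - fsq (Xᵀ * M) := by
  have key : ∀ N : Matrix (Fin b) (Fin c) ℝ, X * (Xᵀ * (X * N)) = X * N := by
    intro N
    calc X * (Xᵀ * (X * N)) = X * (Xᵀ * X) * N := by
          rw [Matrix.mul_assoc, Matrix.mul_assoc]
      _ = X * N := by rw [hX]
  rw [fsq_eq_trace, fsq_eq_trace, fsq_eq_trace]
  have e1 : (1 - X * Xᵀ) * M = M - X * (Xᵀ * M) := by
    rw [Matrix.sub_mul, Matrix.one_mul, Matrix.mul_assoc]
  rw [e1]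
  have e2 : (M - X * (Xᵀ * M))ᵀ = Mᵀ - (Xᵀ * M)ᵀ * Xᵀ := by
    rw [Matrix.transpose_sub, Matrix.transpose_mul]
  rw [e2, Matrix.sub_mul, Matrix.mul_sub, Matrix.mul_sub, Matrix.transpose_mul,
    Matrix.transpose_transpose]
  simp only [Matrix.mul_assoc, key, Matrix.trace_sub]
  ring

lemma specNorm_nonneg {m n : ℕ} (M : Matrix (Fin m) (Fin n) ℝ) : 0 ≤ specNorm M :=
  norm_nonneg _

lemma spec_mulVec {m n : ℕ} (M : Matrix (Fin m) (Fin n) ℝ) (v : Fin n → ℝ) :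
    ∑ i, (M.mulVec v i) ^ 2 ≤ specNorm M ^ 2 * ∑ j, (v j) ^ 2 := by
  set x : EuclideanSpace ℝ (Fin n) := (WithLp.equiv 2 (Fin n → ℝ)).symm v with hx
  have hb := (LinearMap.toContinuousLinearMap (Matrix.toEuclideanLin M)).le_opNorm x
  have he : (LinearMap.toContinuousLinearMap (Matrix.toEuclideanLin M)) x
      = (WithLp.equiv 2 (Fin m → ℝ)).symm (M.mulVec v) := by
    simp [hx, Matrix.toEuclideanLin_apply_piLp_toLp]
  rw [he] at hb
  have hnx : ‖x‖ = Real.sqrt (∑ j, (v j) ^ 2) := by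
    rw [EuclideanSpace.norm_eq]
    congr 1
    refine Finset.sum_congr rfl fun j _ => ?_
    rw [Real.norm_eq_abs, sq_abs]
    rfl
  have hny : ‖(WithLp.equiv 2 (Fin m → ℝ)).symm (M.mulVec v)‖
      = Real.sqrt (∑ i, (M.mulVec v i) ^ 2) := by
    rw [EuclideanSpace.norm_eq]
    congr 1
    refine Finset.sum_congr rfl fun i _ => ?_
    rw [Real.norm_eq_abs, sq_abs]
    rfl
  rw [hny, hnx] at hb
  have hb' : Real.sqrt (∑ i, (M.mulVec v i) ^ 2)
      ≤ specNorm M * Real.sqrt (∑ j, (v j) ^ 2) := hb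
  have h1 : (0:ℝ) ≤ ∑ i, (M.mulVec v i) ^ 2 := Finset.sum_nonneg fun _ _ => sq_nonneg _
  have h2 : (0:ℝ) ≤ ∑ j, (v j) ^ 2 := Finset.sum_nonneg fun _ _ => sq_nonneg _
  have h3 := Real.sqrt_nonneg (∑ i, (M.mulVec v i) ^ 2)
  calc ∑ i, (M.mulVec v i) ^ 2 = Real.sqrt (∑ i, (M.mulVec v i) ^ 2) ^ 2 :=
        (Real.sq_sqrt h1).symm
    _ ≤ (specNorm M * Real.sqrt (∑ j, (v j) ^ 2)) ^ 2 := by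
        exact pow_le_pow_left₀ h3 hb' 2
    _ = specNorm M ^ 2 * ∑ j, (v j) ^ 2 := by rw [mul_pow, Real.sq_sqrt h2]

lemma spec_mulVec_transpose {m n : ℕ} (M : Matrix (Fin m) (Fin n) ℝ) (v : Fin m → ℝ) :
    ∑ j, (Mᵀ.mulVec v j) ^ 2 ≤ specNorm M ^ 2 * ∑ i, (v i) ^ 2 := by
  set u : Fin n → ℝ := Mᵀ.mulVec v with hu
  set T : ℝ := ∑ j, (u j) ^ 2 with hT
  have hT0 : 0 ≤ T := Finset.sum_nonneg fun _ _ => sq_nonneg _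
  have key : T = ∑ i, v i * (M.mulVec u i) := by
    have lhs : T = ∑ j, ∑ i, M i j * v i * u j := by
      rw [hT]
      refine Finset.sum_congr rfl fun j _ => ?_
      rw [sq, show u j = ∑ i, M i j * v i by
        simp [hu, Matrix.mulVec, dotProduct, Matrix.transpose_apply],
        Finset.sum_mul]
    rw [lhs, Finset.sum_comm]
    refine Finset.sum_congr rfl fun i _ => ?_
    simp only [Matrix.mulVec, dotProduct]
    rw [Finset.mul_sum]
    exact Finset.sum_congr rfl fun j _ => by ring
  have cs : (∑ i, v i * (M.mulVec u i)) ^ 2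
      ≤ (∑ i, (v i) ^ 2) * (∑ i, (M.mulVec u i) ^ 2) :=
    Finset.sum_mul_sq_le_sq_mul_sq _ _ _
  have hMu : ∑ i, (M.mulVec u i) ^ 2 ≤ specNorm M ^ 2 * T := spec_mulVec M u
  have hv2 : (0:ℝ) ≤ ∑ i, (v i) ^ 2 := Finset.sum_nonneg fun _ _ => sq_nonneg _
  rcases eq_or_lt_of_le hT0 with h0 | hpos
  · rw [← h0]; positivity
  · have : T ^ 2 ≤ (∑ i, (v i) ^ 2) * (specNorm M ^ 2 * T) := by
      calc T ^ 2 = (∑ i, v i * (M.mulVec u i)) ^ 2 := by rw [key]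
        _ ≤ (∑ i, (v i) ^ 2) * (∑ i, (M.mulVec u i) ^ 2) := cs
        _ ≤ (∑ i, (v i) ^ 2) * (specNorm M ^ 2 * T) :=
            mul_le_mul_of_nonneg_left hMu hv2
    have := le_of_mul_le_mul_right (by nlinarith : T * T ≤ (specNorm M ^ 2 * ∑ i, (v i) ^ 2) * T) hpos
    linarith

lemma fsq_mul_le_spec {a t k : ℕ} (M : Matrix (Fin a) (Fin t) ℝ)
    (P : Matrix (Fin t) (Fin k) ℝ) :
    fsq (M * P) ≤ specNorm P ^ 2 * fsq M := by
  unfold fsq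
  rw [Finset.mul_sum]
  refine Finset.sum_le_sum fun i _ => ?_
  have h := spec_mulVec_transpose P (fun l => M i l)
  calc ∑ j, ((M * P) i j) ^ 2 = ∑ j, (Pᵀ.mulVec (fun l => M i l) j) ^ 2 := by
        refine Finset.sum_congr rfl fun j _ => ?_
        congr 1
        simp [Matrix.mul_apply, Matrix.mulVec, dotProduct, mul_comm]
    _ ≤ specNorm P ^ 2 * ∑ l, (M i l) ^ 2 := h

lemma indicator_facts {n k : ℕ} (X : Matrix (Fin n) (Fin k) ℝ) (hX : IsIndicator X) :
    X * (Xᵀ * X) = X ∧ Matrix.trace (Xᵀ * X) ≤ (k : ℝ) := by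
  obtain ⟨f, hf⟩ := hX
  set z : Fin k → ℕ := fun j => (Finset.univ.filter fun i' => f i' = j).card with hz
  have hXf : ∀ i j, X i j = if f i = j then 1 / Real.sqrt (z j) else 0 := hf
  have gram : ∀ j j' : Fin k, (Xᵀ * X) j j' = if j = j' ∧ z j ≠ 0 then 1 else 0 := by
    intro j j'
    rw [Matrix.mul_apply]
    simp only [Matrix.transpose_apply]
    by_cases h : j = j'
    · subst h
      have hterm : ∀ i, X i j * X i j = if f i = j then (1 / Real.sqrt (z j)) ^ 2 else 0 := by
        intro i; rw [hXf]; by_cases h1 : f i = j <;> simp [h1, sq]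
      rw [Finset.sum_congr rfl fun i _ => hterm i, ← Finset.sum_filter, Finset.sum_const]
      by_cases hzj : z j = 0
      · simp [hzj]
      · simp only [hzj, and_true, if_pos rfl, ne_eq, not_false_iff]
        rw [div_pow, one_pow, Real.sq_sqrt (Nat.cast_nonneg (z j)), nsmul_eq_mul]
        rw [mul_one_div, div_self (by exact_mod_cast hzj)]
        simp
    · have hterm : ∀ i, X i j * X i j' = 0 := by
        intro i; rw [hXf, hXf]
        by_cases h2 : f i = j'
        · have h1 : ¬ f i = j := fun h1 => h ((h1.symm.trans h2 : j = j'))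
          simp [h1]
        · simp [h2]
      rw [Finset.sum_congr rfl fun i _ => hterm i]
      simp [h]
  constructor
  · ext i j
    rw [Matrix.mul_apply]
    have hterm : ∀ j' : Fin k, X i j' * (Xᵀ * X) j' j
        = if j' = j then (if z j ≠ 0 then X i j else 0) else 0 := by
      intro j'
      rw [gram]
      by_cases h1 : j' = j
      · subst h1; by_cases h2 : z j' ≠ 0 <;> simp [h2]
      · simp [h1]
    rw [Finset.sum_congr rfl fun j' _ => hterm j', Finset.sum_ite_eq' Finset.univ j]
    simp only [Finset.mem_univ, if_pos]
    by_cases h2 : z j = 0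
    · have hfij : f i ≠ j := by
        intro hc
        have hm : i ∈ Finset.univ.filter fun i' => f i' = j := by simp [hc]
        have hcard : 0 < z j := Finset.card_pos.mpr ⟨i, hm⟩
        omega
      simp [h2, hXf, hfij]
    · simp [h2]
  · rw [Matrix.trace]
    calc ∑ j, (Xᵀ * X).diag j ≤ ∑ _j : Fin k, (1:ℝ) := by
          refine Finset.sum_le_sum fun j _ => ?_
          rw [Matrix.diag_apply, gram]
          by_cases h : z j ≠ 0 <;> simp [h]
      _ = k := by simp

lemma majorize (s c : ℕ → ℝ) (N k : ℕ) (hk : k ≤ N)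
    (hmono : ∀ i j : ℕ, i ≤ j → s j ≤ s i) (hs0 : ∀ i, 0 ≤ s i)
    (hc0 : ∀ i, 0 ≤ c i) (hc1 : ∀ i, c i ≤ 1)
    (hsum : ∑ i ∈ Finset.range N, c i ≤ (k : ℝ)) :
    ∑ i ∈ Finset.range N, s i * c i ≤ ∑ i ∈ Finset.range k, s i := by
  have hsplit : ∀ g : ℕ → ℝ, ∑ i ∈ Finset.range N, g i
      = ∑ i ∈ Finset.range k, g i + ∑ i ∈ Finset.Ico k N, g i := by
    intro g
    rw [Finset.range_eq_Ico, Finset.range_eq_Ico]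
    exact (Finset.sum_Ico_consecutive g (Nat.zero_le k) hk).symm
  rw [hsplit fun i => s i * c i]
  rw [hsplit c] at hsum
  have h1 : ∑ i ∈ Finset.range k, s i * c i
      ≤ ∑ i ∈ Finset.range k, (s i + s k * (c i - 1)) := by
    refine Finset.sum_le_sum fun i hi => ?_
    have hik := hmono i k (Nat.le_of_lt (Finset.mem_range.mp hi))
    nlinarith [hc1 i, hc0 i, hs0 i]
  have h2 : ∑ i ∈ Finset.Ico k N, s i * c i ≤ s k * ∑ i ∈ Finset.Ico k N, c i := by
    rw [Finset.mul_sum]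
    refine Finset.sum_le_sum fun i hi => ?_
    have := hmono k i (Finset.mem_Ico.mp hi).1
    exact mul_le_mul_of_nonneg_right this (hc0 i)
  have h3 : ∑ i ∈ Finset.range k, (s i + s k * (c i - 1))
      = ∑ i ∈ Finset.range k, s i + s k * (∑ i ∈ Finset.range k, c i - k) := by
    rw [Finset.sum_add_distrib, ← Finset.mul_sum, Finset.sum_sub_distrib,
      Finset.sum_const, Finset.card_range, nsmul_eq_mul, mul_one]
  have h4 : s k * (∑ i ∈ Finset.range k, c i - k) + s k * ∑ i ∈ Finset.Ico k N, c i ≤ 0 := by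
    have : s k * ((∑ i ∈ Finset.range k, c i - k) + ∑ i ∈ Finset.Ico k N, c i) ≤ 0 :=
      mul_nonpos_of_nonneg_of_nonpos (hs0 k) (by linarith)
    linarith [this, mul_add (s k) (∑ i ∈ Finset.range k, c i - (k:ℝ))
      (∑ i ∈ Finset.Ico k N, c i)]
  linarith [h1, h2, h3 ▸ h1]

lemma sum_diag {n d : ℕ} (i : Fin n) (r : ℝ) :
    (∑ j : Fin d, if (i : ℕ) = (j : ℕ) then r else 0) = if (i : ℕ) < d then r else 0 := by
  by_cases hd : (i : ℕ) < d
  · rw [if_pos hd, Finset.sum_eq_single (⟨(i : ℕ), hd⟩ : Fin d)]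
    · simp
    · intro b _ hb
      exact if_neg fun hc => hb (Fin.ext hc).symm
    · intro hb; exact absurd (Finset.mem_univ _) hb
  · rw [if_neg hd]
    refine Finset.sum_eq_zero fun j _ => if_neg fun hc => hd (by omega)

lemma frobNorm_add_le {m n : ℕ} (M N : Matrix (Fin m) (Fin n) ℝ) :
    frobNorm (M + N) ≤ frobNorm M + frobNorm N := by
  have hM := fsq_nonneg M
  have hN := fsq_nonneg N
  have hcs : (∑ i, ∑ j, M i j * N i j) ≤ frobNorm M * frobNorm N := by
    have h2 : (∑ i, ∑ j, M i j * N i j) ^ 2 ≤ fsq M * fsq N := by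
      have := Finset.sum_mul_sq_le_sq_mul_sq (Finset.univ ×ˢ Finset.univ)
        (fun p : Fin m × Fin n => M p.1 p.2) (fun p => N p.1 p.2)
      simpa [← Finset.univ_product_univ, Finset.sum_product, fsq] using this
    calc (∑ i, ∑ j, M i j * N i j) ≤ |∑ i, ∑ j, M i j * N i j| := le_abs_self _
      _ = Real.sqrt ((∑ i, ∑ j, M i j * N i j) ^ 2) := (Real.sqrt_sq_eq_abs _).symm
      _ ≤ Real.sqrt (fsq M * fsq N) := Real.sqrt_le_sqrt h2
      _ = frobNorm M * frobNorm N := by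
          rw [Real.sqrt_mul hM, frobNorm_eq, frobNorm_eq]
  have hexp : fsq (M + N) = fsq M + 2 * (∑ i, ∑ j, M i j * N i j) + fsq N := by
    unfold fsq
    simp only [Matrix.add_apply]
    rw [Finset.sum_congr rfl fun i _ => Finset.sum_congr rfl fun j _ =>
      (by ring : (M i j + N i j) ^ 2 = M i j ^ 2 + 2 * (M i j * N i j) + N i j ^ 2)]
    simp only [Finset.sum_add_distrib, Finset.mul_sum]
  rw [frobNorm_eq]
  have hb : fsq (M + N) ≤ (frobNorm M + frobNorm N) ^ 2 := by
    rw [hexp]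
    have := frobNorm_sq M
    have := frobNorm_sq N
    nlinarith [hcs]
  calc Real.sqrt (fsq (M + N)) ≤ Real.sqrt ((frobNorm M + frobNorm N) ^ 2) :=
        Real.sqrt_le_sqrt hb
    _ = frobNorm M + frobNorm N :=
        Real.sqrt_sq (by linarith [frobNorm_nonneg M, frobNorm_nonneg N])

lemma frobNorm_mul_spec_le {a t k : ℕ} (M : Matrix (Fin a) (Fin t) ℝ)
    (P : Matrix (Fin t) (Fin k) ℝ) :
    frobNorm (M * P) ≤ specNorm P * frobNorm M := by
  rw [frobNorm_eq, frobNorm_eq]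
  calc Real.sqrt (fsq (M * P)) ≤ Real.sqrt (specNorm P ^ 2 * fsq M) :=
        Real.sqrt_le_sqrt (fsq_mul_le_spec M P)
    _ = specNorm P * Real.sqrt (fsq M) := by
        rw [Real.sqrt_mul (sq_nonneg _), Real.sqrt_sq (specNorm_nonneg P)]

lemma frobNorm_one_sub_le {a b c : ℕ} (X : Matrix (Fin a) (Fin b) ℝ)
    (hX : X * (Xᵀ * X) = X) (M : Matrix (Fin a) (Fin c) ℝ) :
    frobNorm ((1 - X * Xᵀ) * M) ≤ frobNorm M := by
  rw [frobNorm_eq, frobNorm_eq]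
  exact Real.sqrt_le_sqrt (by rw [fsq_one_sub_proj X hX M]; linarith [fsq_nonneg (Xᵀ * M)])

lemma frobNorm_mul_transpose_right {a b c : ℕ} (V : Matrix (Fin a) (Fin b) ℝ)
    (h : Vᵀ * V = 1) (M : Matrix (Fin c) (Fin b) ℝ) : frobNorm (M * Vᵀ) = frobNorm M := by
  rw [frobNorm_eq, frobNorm_eq, fsq_mul_transpose_right V h M]

lemma key_XA {n d k : ℕ} (hkd : k ≤ d)
    (σ : ℕ → ℝ) (hmono : ∀ i j : ℕ, i ≤ j → σ j ≤ σ i) (hs0 : ∀ i, 0 ≤ σ i)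
    (U : Matrix (Fin n) (Fin n) ℝ) (hUU : U * Uᵀ = 1)
    (W : Matrix (Fin d) (Fin d) ℝ) (hW : Wᵀ * W = 1)
    (A : Matrix (Fin n) (Fin d) ℝ)
    (hA : A = U * (Matrix.of fun (i : Fin n) (j : Fin d) =>
      if (i : ℕ) = (j : ℕ) then σ (i : ℕ) else 0) * Wᵀ)
    (X : Matrix (Fin n) (Fin k) ℝ) (hG : X * (Xᵀ * X) = X)
    (htr : Matrix.trace (Xᵀ * X) ≤ (k : ℝ)) :
    fsq (Xᵀ * A) ≤ ∑ m ∈ Finset.range k, σ m ^ 2 := by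
  set D : Matrix (Fin n) (Fin d) ℝ := Matrix.of fun (i : Fin n) (j : Fin d) =>
    if (i : ℕ) = (j : ℕ) then σ (i : ℕ) else 0 with hD
  set Y : Matrix (Fin n) (Fin k) ℝ := Uᵀ * X with hY
  have h1 : fsq (Xᵀ * A) = fsq (Yᵀ * D) := by
    have e : Xᵀ * A = (Yᵀ * D) * Wᵀ := by
      rw [hA, hY, Matrix.transpose_mul, Matrix.transpose_transpose]
      simp only [Matrix.mul_assoc]
    rw [e, fsq_mul_transpose_right W hW]
  have hYY : Yᵀ * Y = Xᵀ * X := by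
    rw [hY, Matrix.transpose_mul, Matrix.transpose_transpose]
    calc Xᵀ * U * (Uᵀ * X) = Xᵀ * (U * Uᵀ * X) := by simp only [Matrix.mul_assoc]
      _ = Xᵀ * X := by rw [hUU, Matrix.one_mul]
  have hYG : Y * (Yᵀ * Y) = Y := by
    rw [hYY, hY, Matrix.mul_assoc, hG]
  set Q : Matrix (Fin n) (Fin n) ℝ := Y * Yᵀ with hQ
  have hQsym : ∀ i m, Q m i = Q i m := by
    intro i m
    rw [hQ]
    simp only [Matrix.mul_apply, Matrix.transpose_apply]
    exact Finset.sum_congr rfl fun j _ => mul_comm _ _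
  have hQQ : Q * Q = Q := by
    rw [hQ]
    calc Y * Yᵀ * (Y * Yᵀ) = Y * (Yᵀ * Y) * Yᵀ := by simp only [Matrix.mul_assoc]
      _ = Y * Yᵀ := by rw [hYG]
  have hcQ : ∀ i, (∑ j, (Y i j) ^ 2) = Q i i := by
    intro i
    rw [hQ, Matrix.mul_apply]
    exact Finset.sum_congr rfl fun j _ => by
      rw [Matrix.transpose_apply, sq]
  have hc0 : ∀ i, 0 ≤ Q i i := fun i =>
    (hcQ i) ▸ Finset.sum_nonneg fun _ _ => sq_nonneg _
  have hc1 : ∀ i, Q i i ≤ 1 := by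
    intro i
    have h := congrFun (congrFun hQQ i) i
    have hsum : (Q * Q) i i = ∑ m, Q i m ^ 2 := by
      rw [Matrix.mul_apply]
      exact Finset.sum_congr rfl fun m _ => by rw [hQsym i m, sq]
    have hsingle : Q i i ^ 2 ≤ ∑ m, Q i m ^ 2 :=
      Finset.single_le_sum (f := fun m => Q i m ^ 2) (fun m _ => sq_nonneg _)
        (Finset.mem_univ i)
    nlinarith [hc0 i]
  have htrQ : (∑ i, Q i i) ≤ (k : ℝ) := by
    have e1 : (∑ i, Q i i) = Matrix.trace Q := by
      simp [Matrix.trace, Matrix.diag]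
    have e2 : Matrix.trace Q = Matrix.trace (Xᵀ * X) := by
      rw [hQ, Matrix.trace_mul_comm, hYY]
    rw [e1, e2]; exact htr
  have hentry : ∀ (j : Fin k) (l : Fin d), (Yᵀ * D) j l
      = if h : (l : ℕ) < n then Y ⟨(l : ℕ), h⟩ j * σ (l : ℕ) else 0 := by
    intro j l
    rw [Matrix.mul_apply]
    by_cases h : (l : ℕ) < n
    · rw [dif_pos h, Finset.sum_eq_single (⟨(l : ℕ), h⟩ : Fin n)]
      · simp [hD, Matrix.transpose_apply]
      · intro b _ hb
        have : D b l = 0 := by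
          rw [hD]
          exact if_neg fun hc => hb (Fin.ext hc)
        rw [Matrix.transpose_apply, this, mul_zero]
      · intro hb; exact absurd (Finset.mem_univ _) hb
    · rw [dif_neg h]
      refine Finset.sum_eq_zero fun i _ => ?_
      have : D i l = 0 := by
        rw [hD]
        exact if_neg fun hc => h (by omega)
      rw [Matrix.transpose_apply, this, mul_zero]
  set g : ℕ → ℝ := fun m => if h : m < n then Q ⟨m, h⟩ ⟨m, h⟩ else 0 with hg
  have hfsq : fsq (Yᵀ * D) = ∑ m ∈ Finset.range d, σ m ^ 2 * g m := by
    unfold fsq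
    rw [Finset.sum_comm, ← Fin.sum_univ_eq_sum_range]
    refine Finset.sum_congr rfl fun l _ => ?_
    rw [Finset.sum_congr rfl fun j _ => by rw [hentry j l]]
    by_cases h : (l : ℕ) < n
    · simp only [dif_pos h, hg]
      rw [← hcQ ⟨(l : ℕ), h⟩, Finset.mul_sum]
      exact Finset.sum_congr rfl fun j _ => by ring
    · simp [dif_neg h, hg, h]
  have hgsum : ∑ m ∈ Finset.range d, g m ≤ (k : ℝ) := by
    have hg0 : ∀ m, 0 ≤ g m := by
      intro m; simp only [hg]
      by_cases h : m < n
      · rw [dif_pos h]; exact hc0 _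
      · rw [dif_neg h]
    have e1 : ∑ m ∈ Finset.range d, g m ≤ ∑ m ∈ Finset.range (max d n), g m :=
      Finset.sum_le_sum_of_subset_of_nonneg
        (Finset.range_subset_range.mpr (le_max_left d n)) fun i _ _ => hg0 i
    have e2 : ∑ m ∈ Finset.range (max d n), g m = ∑ m ∈ Finset.range n, g m :=
      (Finset.sum_subset (Finset.range_subset_range.mpr (le_max_right d n))
        fun x _ hx => dif_neg (by simpa using hx)).symm
    have e3 : ∑ m ∈ Finset.range n, g m = ∑ i, Q i i := by
      rw [← Fin.sum_univ_eq_sum_range]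
      refine Finset.sum_congr rfl fun i _ => ?_
      simp only [hg]
      simp only [dif_pos i.isLt, Fin.eta]
    linarith [htrQ, e1, e2.symm ▸ e1]
  have hmaj := majorize (fun m => σ m ^ 2) g d k hkd
    (fun i j hij => pow_le_pow_left₀ (hs0 j) (hmono i j hij) 2)
    (fun i => sq_nonneg _)
    (fun m => by
      simp only [hg]
      by_cases h : m < n
      · rw [dif_pos h]; exact hc0 _
      · rw [dif_neg h])
    (fun m => by
      simp only [hg]
      by_cases h : m < n
      · rw [dif_pos h]; exact hc1 _
      · rw [dif_neg h]; norm_num)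
    hgsum
  rw [h1, hfsq]
  exact hmaj

lemma fsq_diag_plain {n d : ℕ} (σ : ℕ → ℝ) :
    fsq (Matrix.of fun (i : Fin n) (j : Fin d) => if (i:ℕ) = (j:ℕ) then σ (i:ℕ) else 0)
      = ∑ i : Fin n, if (i:ℕ) < d then σ (i:ℕ) ^ 2 else 0 := by
  unfold fsq
  refine Finset.sum_congr rfl fun i _ => ?_
  rw [← sum_diag i (σ (i:ℕ) ^ 2)]
  refine Finset.sum_congr rfl fun j _ => ?_
  simp only [Matrix.of_apply]
  by_cases h : (i:ℕ) = (j:ℕ) <;> simp [h]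

lemma fsq_diag_cond {n d k : ℕ} (σ : ℕ → ℝ) :
    fsq (Matrix.of fun (i : Fin n) (j : Fin d) =>
      if (i:ℕ) = (j:ℕ) ∧ ¬ (i:ℕ) < k then σ (i:ℕ) else 0)
      = ∑ i : Fin n, if (i:ℕ) < d ∧ ¬ (i:ℕ) < k then σ (i:ℕ) ^ 2 else 0 := by
  unfold fsq
  refine Finset.sum_congr rfl fun i _ => ?_
  by_cases hk : (i:ℕ) < k
  · rw [if_neg (fun h => h.2 hk)]
    refine Finset.sum_eq_zero fun j _ => ?_
    rw [Matrix.of_apply, if_neg (fun h => h.2 hk)]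
    norm_num
  · simp only [Matrix.of_apply, hk, not_false_iff, and_true]
    rw [← sum_diag i (σ (i:ℕ) ^ 2)]
    refine Finset.sum_congr rfl fun j _ => ?_
    by_cases h : (i:ℕ) = (j:ℕ) <;> simp [h]


set_option maxHeartbeats 1600000 in
/-- bound on the first term θ₁. -/
theorem statement2 (n d k ρ t : ℕ) (hkn : k < n) (hkd : k < d) (hkρ : k < ρ)
    (hρn : ρ ≤ n) (hρd : ρ ≤ d)
    (ε γ : ℝ) (hε0 : 0 < ε) (hε : ε < 1 / 3) (hγ : 1 ≤ γ)
    (A : Matrix (Fin n) (Fin d) ℝ)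
    (U : Matrix (Fin n) (Fin n) ℝ) (W : Matrix (Fin d) (Fin d) ℝ) (σ : ℕ → ℝ)
    (hU : Uᵀ * U = 1) (hW : Wᵀ * W = 1)
    (hmono : ∀ i j : ℕ, i ≤ j → σ j ≤ σ i)
    (hpos : ∀ i : ℕ, i < ρ → 0 < σ i)
    (hzero : ∀ i : ℕ, ρ ≤ i → σ i = 0)
    (hA : A = U * (Matrix.of fun (i : Fin n) (j : Fin d) =>
      if (i : ℕ) = (j : ℕ) then σ i else 0) * Wᵀ)
    (Ak : Matrix (Fin n) (Fin d) ℝ)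
    (hAk : Ak = U * (Matrix.of fun (i : Fin n) (j : Fin d) =>
      if (i : ℕ) = (j : ℕ) ∧ (i : ℕ) < k then σ i else 0) * Wᵀ)
    (Vk : Matrix (Fin d) (Fin k) ℝ)
    (hVk : Vk = W.submatrix id (Fin.castLE (by omega)))
    (R : Matrix (Fin d) (Fin t) ℝ)
    (Xopt : Matrix (Fin n) (Fin k) ℝ) (hXopt : IsIndicator Xopt)
    (hXoptMin : ∀ X : Matrix (Fin n) (Fin k) ℝ, IsIndicator X →
      frobNorm (A - Xopt * Xoptᵀ * A) ^ 2 ≤ frobNorm (A - X * Xᵀ * A) ^ 2)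
    (P : Matrix (Fin t) (Fin k) ℝ) (hP : IsMoorePenrose (Vkᵀ * R) P)
    (ha1 : (Vkᵀ * R).rank = k)
    (ha2 : specNorm P ≤ 1 / (1 - ε))
    (hb : frobNorm (Ak - A * R * P * Vkᵀ) ≤ 4 * ε * frobNorm (A - Ak))
    (hc : frobNorm ((1 - Xopt * Xoptᵀ) * (A * R)) ≤
      Real.sqrt (1 + ε) * frobNorm ((1 - Xopt * Xoptᵀ) * A))
    (Xt : Matrix (Fin n) (Fin k) ℝ) (hXt : IsIndicator Xt)
    (hXtγ : frobNorm ((1 - Xt * Xtᵀ) * (A * R)) ^ 2 ≤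
      γ * frobNorm ((1 - Xopt * Xoptᵀ) * (A * R)) ^ 2) :
    frobNorm ((1 - Xt * Xtᵀ) * Ak) ≤
      Real.sqrt γ * (1 + 6.5 * ε) * frobNorm ((1 - Xopt * Xoptᵀ) * A) := by
  obtain ⟨hGt, htrt⟩ := indicator_facts Xt hXt
  obtain ⟨hGo, htro⟩ := indicator_facts Xopt hXopt
  have hUU : U * Uᵀ = 1 := mul_eq_one_comm.mp hU
  have h1me : (0:ℝ) < 1 - ε := by linarith
  have hs0 : ∀ i, 0 ≤ σ i := fun i => by
    by_cases h : i < ρ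
    · exact (hpos i h).le
    · rw [hzero i (not_lt.mp h)]
  have hVV : Vkᵀ * Vk = 1 := by
    have hWcol : ∀ x y : Fin d, (∑ i, W i x * W i y) = if x = y then (1:ℝ) else 0 := by
      intro x y
      have h := congrFun (congrFun hW x) y
      simpa [Matrix.mul_apply, Matrix.transpose_apply, Matrix.one_apply] using h
    ext a b
    rw [Matrix.mul_apply]
    simp only [hVk, Matrix.transpose_apply, Matrix.submatrix_apply, id_eq]
    rw [hWcol]
    by_cases hab : a = b
    · simp [hab, Matrix.one_apply]
    · rw [if_neg fun hcast => hab (Fin.castLE_injective _ hcast),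
        Matrix.one_apply_ne hab]
  have eqA : fsq A = ∑ i : Fin n, if (i:ℕ) < d then σ (i:ℕ) ^ 2 else 0 := by
    rw [hA, fsq_mul_transpose_right W hW, fsq_mul_left_orth U hU, fsq_diag_plain]
  have hdiff : A - Ak = U * (Matrix.of fun (i : Fin n) (j : Fin d) =>
      if (i:ℕ) = (j:ℕ) ∧ ¬ (i:ℕ) < k then σ (i:ℕ) else 0) * Wᵀ := by
    rw [hA, hAk, ← Matrix.sub_mul, ← Matrix.mul_sub]
    congr 2
    ext i j
    simp only [Matrix.sub_apply, Matrix.of_apply]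
    by_cases h1 : (i:ℕ) = (j:ℕ)
    · by_cases h2 : (i:ℕ) < k
      · rw [if_pos h1, if_pos ⟨h1, h2⟩, if_neg (fun hp => hp.2 h2)]; ring
      · rw [if_pos h1, if_neg (fun hp => h2 hp.2), if_pos ⟨h1, h2⟩]; ring
    · rw [if_neg h1, if_neg (fun hp => h1 hp.1), if_neg (fun hp => h1 hp.1)]; ring
  have eqD : fsq (A - Ak) = ∑ i : Fin n, if (i:ℕ) < d ∧ ¬ (i:ℕ) < k
      then σ (i:ℕ) ^ 2 else 0 := by
    rw [hdiff, fsq_mul_transpose_right W hW, fsq_mul_left_orth U hU, fsq_diag_cond]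
  have eqsplit : fsq A = fsq (A - Ak) + ∑ m ∈ Finset.range k, σ m ^ 2 := by
    have hk_sum : (∑ i : Fin n, if (i:ℕ) < k then σ (i:ℕ) ^ 2 else 0)
        = ∑ m ∈ Finset.range k, σ m ^ 2 := by
      rw [Fin.sum_univ_eq_sum_range (fun m => if m < k then σ m ^ 2 else 0) n]
      rw [← Finset.sum_subset (Finset.range_subset_range.mpr hkn.le)
        (fun x _ hx => if_neg (by simpa using hx))]
      exact Finset.sum_congr rfl fun m hm => if_pos (Finset.mem_range.mp hm)
    rw [eqA, eqD, ← hk_sum, ← Finset.sum_add_distrib]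
    refine Finset.sum_congr rfl fun i _ => ?_
    by_cases h1 : (i:ℕ) < k
    · have h2 : (i:ℕ) < d := h1.trans hkd
      simp [h1, h2]
    · by_cases h2 : (i:ℕ) < d <;> simp [h1, h2]
  have hEY : ∀ X : Matrix (Fin n) (Fin k) ℝ, X * (Xᵀ * X) = X →
      Matrix.trace (Xᵀ * X) ≤ (k:ℝ) →
      frobNorm (A - Ak) ≤ frobNorm ((1 - X * Xᵀ) * A) := by
    intro X hGX htrX
    rw [frobNorm_eq, frobNorm_eq]
    apply Real.sqrt_le_sqrt
    have h1 := key_XA hkd.le σ hmono hs0 U hUU W hW A hA X hGX htrX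
    rw [fsq_one_sub_proj X hGX A]
    linarith [eqsplit, h1]
  set F := frobNorm ((1 - Xopt * Xoptᵀ) * A) with hF
  have hF0 : 0 ≤ F := frobNorm_nonneg _
  have hAAk : frobNorm (A - Ak) ≤ F := hEY Xopt hGo htro
  have hXtAR : frobNorm ((1 - Xt * Xtᵀ) * (A * R))
      ≤ Real.sqrt γ * (Real.sqrt (1 + ε) * F) := by
    have hsq : frobNorm ((1 - Xt * Xtᵀ) * (A * R))
        ≤ Real.sqrt γ * frobNorm ((1 - Xopt * Xoptᵀ) * (A * R)) := by
      have h := Real.sqrt_le_sqrt hXtγ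
      rwa [Real.sqrt_mul (by linarith : (0:ℝ) ≤ γ), Real.sqrt_sq (frobNorm_nonneg _),
        Real.sqrt_sq (frobNorm_nonneg _)] at h
    exact hsq.trans (mul_le_mul_of_nonneg_left hc (Real.sqrt_nonneg γ))
  have decomp : (1 - Xt * Xtᵀ) * Ak
      = (1 - Xt * Xtᵀ) * (A * R) * P * Vkᵀ
        + (1 - Xt * Xtᵀ) * (Ak - A * R * P * Vkᵀ) := by
    rw [Matrix.mul_sub]
    simp only [Matrix.mul_assoc]
    abel
  have hT1 : frobNorm ((1 - Xt * Xtᵀ) * (A * R) * P * Vkᵀ)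
      ≤ (1 / (1 - ε)) * (Real.sqrt γ * (Real.sqrt (1 + ε) * F)) := by
    rw [frobNorm_mul_transpose_right Vk hVV]
    calc frobNorm ((1 - Xt * Xtᵀ) * (A * R) * P)
        ≤ specNorm P * frobNorm ((1 - Xt * Xtᵀ) * (A * R)) := frobNorm_mul_spec_le _ P
      _ ≤ (1 / (1 - ε)) * (Real.sqrt γ * (Real.sqrt (1 + ε) * F)) :=
          mul_le_mul ha2 hXtAR (frobNorm_nonneg _) (le_of_lt (one_div_pos.mpr h1me))
  have hT2 : frobNorm ((1 - Xt * Xtᵀ) * (Ak - A * R * P * Vkᵀ)) ≤ 4 * ε * F := by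
    calc frobNorm ((1 - Xt * Xtᵀ) * (Ak - A * R * P * Vkᵀ))
        ≤ frobNorm (Ak - A * R * P * Vkᵀ) := frobNorm_one_sub_le Xt hGt _
      _ ≤ 4 * ε * frobNorm (A - Ak) := hb
      _ ≤ 4 * ε * F := mul_le_mul_of_nonneg_left hAAk (by linarith : (0:ℝ) ≤ 4 * ε)
  have hg1 : (1:ℝ) ≤ Real.sqrt γ := by
    rw [show (1:ℝ) = Real.sqrt 1 from Real.sqrt_one.symm]
    exact Real.sqrt_le_sqrt hγ
  have hsε : Real.sqrt (1 + ε) ≤ (1 + 2.5 * ε) * (1 - ε) := by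
    have ha : (0:ℝ) ≤ ε * (1/3 - ε) := mul_nonneg hε0.le (by linarith)
    have hbb : (0:ℝ) ≤ ε * ε * (1/3 - ε) := mul_nonneg (mul_nonneg hε0.le hε0.le) (by linarith)
    have h4 : (0:ℝ) ≤ ε ^ 4 := by positivity
    have h : (1:ℝ) + ε ≤ ((1 + 2.5 * ε) * (1 - ε)) ^ 2 := by nlinarith [ha, hbb, h4, hε0.le]
    calc Real.sqrt (1 + ε) ≤ Real.sqrt (((1 + 2.5 * ε) * (1 - ε)) ^ 2) :=
          Real.sqrt_le_sqrt h
      _ = (1 + 2.5 * ε) * (1 - ε) :=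
          Real.sqrt_sq (mul_nonneg (by linarith) (by linarith))
  have hdiv : (1 / (1 - ε)) * (Real.sqrt γ * (Real.sqrt (1 + ε) * F))
      ≤ (1 + 2.5 * ε) * (Real.sqrt γ * F) := by
    have key : Real.sqrt (1 + ε) * (Real.sqrt γ * F)
        ≤ ((1 + 2.5 * ε) * (1 - ε)) * (Real.sqrt γ * F) :=
      mul_le_mul_of_nonneg_right hsε (by positivity)
    calc (1 / (1 - ε)) * (Real.sqrt γ * (Real.sqrt (1 + ε) * F))
        = (Real.sqrt (1 + ε) * (Real.sqrt γ * F)) / (1 - ε) := by ring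
      _ ≤ (((1 + 2.5 * ε) * (1 - ε)) * (Real.sqrt γ * F)) / (1 - ε) := by gcongr
      _ = (1 + 2.5 * ε) * (Real.sqrt γ * F) := by
          field_simp
  calc frobNorm ((1 - Xt * Xtᵀ) * Ak)
      = frobNorm ((1 - Xt * Xtᵀ) * (A * R) * P * Vkᵀ
          + (1 - Xt * Xtᵀ) * (Ak - A * R * P * Vkᵀ)) := by rw [← decomp]
    _ ≤ frobNorm ((1 - Xt * Xtᵀ) * (A * R) * P * Vkᵀ)
          + frobNorm ((1 - Xt * Xtᵀ) * (Ak - A * R * P * Vkᵀ)) := frobNorm_add_le _ _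
    _ ≤ (1 + 2.5 * ε) * (Real.sqrt γ * F) + 4 * ε * F :=
          add_le_add (hT1.trans hdiv) hT2
    _ ≤ Real.sqrt γ * (1 + 6.5 * ε) * F := by
          nlinarith [mul_nonneg (mul_nonneg hε0.le hF0) (sub_nonneg.mpr hg1),
            Real.sqrt_nonneg γ]
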